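/- Let b be a nondegenerate symmetric bilinear form on ℝ^n, E a subset of ℝ^n and ι : E → ℝ^n a map such that the spans of E and of ι(E) are nondegenerate subspaces (i.e., b restricted to each span is nondegenerate). Then ι extends to a linear isometry of (ℝ^n, b) if and only if b(x,y) = b(ι(x), ι(y)) for all x, y ∈ E. -/

import Mathlib

open Module LinearMap


/-- Diagonal expansion of `B x x` in an orthogonal basis. -/
lemma ortho_apply_self_eq_sum {V : Type*} [AddCommGroup V] [Module ℝ V]
    {ι : Type*} [Fintype ι] [DecidableEq ι] (B : LinearMap.BilinForm ℝ V)
    (e : Basis ι ℝ V) (he : B.iIsOrtho e) (x : V) :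
    B x x = ∑ i, (e.repr x i)^2 * B (e i) (e i) := by
  conv_lhs => rw [← e.sum_repr x]
  simp only [map_sum, LinearMap.sum_apply, map_smul, LinearMap.smul_apply, smul_eq_mul]
  refine Finset.sum_congr rfl fun i _ => ?_
  rw [Finset.sum_eq_single i]
  · ring
  · intro j _ hj
    have : B (e j) (e i) = 0 := he hj
    rw [this]; ring
  · simp

lemma exists_pm_one_orthogonal_basis {V : Type*} [AddCommGroup V] [Module ℝ V]
    [FiniteDimensional ℝ V] (B : LinearMap.BilinForm ℝ V) (hs : B.IsSymm)
    (hn : B.Nondegenerate) :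
    ∃ e : Basis (Fin (finrank ℝ V)) ℝ V, B.iIsOrtho e ∧
      ∀ i, B (e i) (e i) = 1 ∨ B (e i) (e i) = -1 := by
  obtain ⟨v, hv⟩ := LinearMap.BilinForm.exists_orthogonal_basis (LinearMap.BilinForm.isSymm_iff.mp hs)
  have hvnz : ∀ i, B (v i) (v i) ≠ 0 := fun i =>
    (LinearMap.BilinForm.iIsOrtho.nondegenerate_iff_not_isOrtho_basis_self B v hv).mp hn i
  set c : Fin (finrank ℝ V) → ℝ := fun i => (Real.sqrt |B (v i) (v i)|)⁻¹ with hc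
  have hcnz : ∀ i, c i ≠ 0 := by
    intro i
    simp only [hc, ne_eq, inv_eq_zero]
    rw [Real.sqrt_eq_zero (abs_nonneg _)]
    simpa using hvnz i
  refine ⟨v.isUnitSMul (fun i => (Units.mk0 (c i) (hcnz i)).isUnit), ?_, ?_⟩
  · intro i j hij
    show B _ _ = 0
    rw [Basis.isUnitSMul_apply, Basis.isUnitSMul_apply, map_smul, map_smul]
    have : B (v i) (v j) = 0 := hv hij
    simp [this]
  · intro i
    simp only [Basis.isUnitSMul_apply, map_smul, LinearMap.smul_apply, smul_eq_mul,
      Units.val_mk0]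
    have hval : c i * (c i * B (v i) (v i)) = B (v i) (v i) / |B (v i) (v i)| := by
      rw [← mul_assoc, hc]
      simp only
      rw [← mul_inv, Real.mul_self_sqrt (abs_nonneg _), div_eq_mul_inv, mul_comm]
    rw [hval]
    rcases lt_or_gt_of_ne (hvnz i) with h | h
    · right
      rw [abs_of_neg h, div_neg, div_self (hvnz i)]
    · left
      rw [abs_of_pos h, div_self (hvnz i)]

lemma posCount_le {V : Type*} [AddCommGroup V] [Module ℝ V] [FiniteDimensional ℝ V]
    {ι κ : Type*} [Fintype ι] [Fintype κ] [DecidableEq ι] [DecidableEq κ]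
    (B : LinearMap.BilinForm ℝ V)
    (e : Basis ι ℝ V) (f : Basis κ ℝ V) (he : B.iIsOrtho e) (hf : B.iIsOrtho f)
    (hfnz : ∀ j, B (f j) (f j) ≠ 0) :
    Fintype.card {i // 0 < B (e i) (e i)} ≤ Fintype.card {j // 0 < B (f j) (f j)} := by
  classical
  set S : Set ι := {i | 0 < B (e i) (e i)} with hS
  set T : Set κ := {j | ¬ 0 < B (f j) (f j)} with hT
  set P := Submodule.span ℝ (e '' S) with hP
  set N := Submodule.span ℝ (f '' T) with hN
  have hdis : Disjoint P N := by
    rw [Submodule.disjoint_def]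
    intro x hxP hxN
    by_contra hx
    have h1 : 0 < B x x := by
      rw [ortho_apply_self_eq_sum B e he x]
      have hsupp : ↑(e.repr x).support ⊆ S := (Basis.mem_span_image e).mp hxP
      have hterm : ∀ i, 0 ≤ (e.repr x i)^2 * B (e i) (e i) := by
        intro i
        by_cases hi : e.repr x i = 0
        · simp [hi]
        · have : i ∈ S := hsupp (Finsupp.mem_support_iff.mpr hi)
          exact mul_nonneg (sq_nonneg _) this.le
      have hx0 : ∃ i, e.repr x i ≠ 0 := by
        by_contra h
        push_neg at h
        exact hx (by simpa using e.repr.map_eq_zero_iff.mp (Finsupp.ext h))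
      obtain ⟨i, hi⟩ := hx0
      have hiS : i ∈ S := hsupp (Finsupp.mem_support_iff.mpr hi)
      refine Finset.sum_pos' (fun i _ => hterm i) ⟨i, Finset.mem_univ i, ?_⟩
      have h2 : (0:ℝ) < (e.repr x i)^2 := by positivity
      exact mul_pos h2 hiS
    have h2 : B x x ≤ 0 := by
      rw [ortho_apply_self_eq_sum B f hf x]
      have hsupp : ↑(f.repr x).support ⊆ T := (Basis.mem_span_image f).mp hxN
      refine Finset.sum_nonpos fun j _ => ?_
      by_cases hj : f.repr x j = 0
      · simp [hj]
      · have hjT : j ∈ T := hsupp (Finsupp.mem_support_iff.mpr hj)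
        have : B (f j) (f j) < 0 := lt_of_le_of_ne (not_lt.mp hjT) (hfnz j)
        exact mul_nonpos_of_nonneg_of_nonpos (sq_nonneg _) this.le
    exact absurd h2 (not_le.mpr h1)
  have hrankP : finrank ℝ P = Fintype.card S := by
    rw [hP, Set.image_eq_range]
    exact finrank_span_eq_card (e.linearIndependent.comp _ Subtype.val_injective)
  have hrankN : finrank ℝ N = Fintype.card T := by
    rw [hN, Set.image_eq_range]
    exact finrank_span_eq_card (f.linearIndependent.comp _ Subtype.val_injective)
  have hsum : finrank ℝ P + finrank ℝ N ≤ finrank ℝ V := by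
    have := Submodule.finrank_sup_add_finrank_inf_eq P N
    rw [hdis.eq_bot] at this
    simp only [finrank_bot, add_zero] at this
    rw [← this]
    exact Submodule.finrank_le _
  have hV : finrank ℝ V = Fintype.card κ := finrank_eq_card_basis f
  have hcT : Fintype.card T = Fintype.card κ - Fintype.card {j // 0 < B (f j) (f j)} := by
    rw [show Fintype.card T = Fintype.card {j // ¬ 0 < B (f j) (f j)} from Fintype.card_congr' rfl]
    exact Fintype.card_subtype_compl _
  have hle : Fintype.card {j // 0 < B (f j) (f j)} ≤ Fintype.card κ :=
    Fintype.card_subtype_le _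
  have hcS : Fintype.card S = Fintype.card {i // 0 < B (e i) (e i)} := Fintype.card_congr' rfl
  omega

lemma posCount_eq {V : Type*} [AddCommGroup V] [Module ℝ V] [FiniteDimensional ℝ V]
    {ι κ : Type*} [Fintype ι] [Fintype κ] [DecidableEq ι] [DecidableEq κ]
    (B : LinearMap.BilinForm ℝ V)
    (e : Basis ι ℝ V) (f : Basis κ ℝ V) (he : B.iIsOrtho e) (hf : B.iIsOrtho f)
    (henz : ∀ i, B (e i) (e i) ≠ 0) (hfnz : ∀ j, B (f j) (f j) ≠ 0) :
    Fintype.card {i // 0 < B (e i) (e i)} = Fintype.card {j // 0 < B (f j) (f j)} :=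
  le_antisymm (posCount_le B e f he hf hfnz) (posCount_le B f e hf he henz)

lemma isometry_of_posCount_eq {V W : Type*} [AddCommGroup V] [Module ℝ V]
    [AddCommGroup W] [Module ℝ W]
    {ι κ : Type*} [Fintype ι] [Fintype κ] [DecidableEq ι] [DecidableEq κ]
    (BV : LinearMap.BilinForm ℝ V) (BW : LinearMap.BilinForm ℝ W)
    (e : Basis ι ℝ V) (f : Basis κ ℝ W)
    (he : BV.iIsOrtho e) (hf : BW.iIsOrtho f)
    (he1 : ∀ i, BV (e i) (e i) = 1 ∨ BV (e i) (e i) = -1)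
    (hf1 : ∀ j, BW (f j) (f j) = 1 ∨ BW (f j) (f j) = -1)
    (hcard : Fintype.card ι = Fintype.card κ)
    (hpos : Fintype.card {i // 0 < BV (e i) (e i)} = Fintype.card {j // 0 < BW (f j) (f j)}) :
    ∃ g : V ≃ₗ[ℝ] W, ∀ x y, BW (g x) (g y) = BV x y := by
  classical
  set p : ι → Prop := fun i => 0 < BV (e i) (e i) with hp
  set q : κ → Prop := fun j => 0 < BW (f j) (f j) with hq
  have hneg : Fintype.card {i // ¬ p i} = Fintype.card {j // ¬ q j} := by
    rw [Fintype.card_subtype_compl, Fintype.card_subtype_compl, hcard, hpos]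
  let tpos : {i // p i} ≃ {j // q j} := Fintype.equivOfCardEq hpos
  let tneg : {i // ¬ p i} ≃ {j // ¬ q j} := Fintype.equivOfCardEq hneg
  let σ : ι ≃ κ := (Equiv.sumCompl p).symm.trans ((tpos.sumCongr tneg).trans (Equiv.sumCompl q))
  have hσ : ∀ i, q (σ i) ↔ p i := by
    intro i
    by_cases hi : p i
    · simp only [σ, Equiv.trans_apply, Equiv.sumCompl_symm_apply_of_pos hi,
        Equiv.sumCongr_apply, Sum.map_inl, Equiv.sumCompl_apply_inl]
      exact iff_of_true (tpos ⟨i, hi⟩).2 hi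
    · simp only [σ, Equiv.trans_apply, Equiv.sumCompl_symm_apply_of_neg hi,
        Equiv.sumCongr_apply, Sum.map_inr, Equiv.sumCompl_apply_inr]
      exact iff_of_false (tneg ⟨i, hi⟩).2 hi
  refine ⟨e.equiv f σ, ?_⟩
  have key : BW.compl₁₂ (e.equiv f σ).toLinearMap (e.equiv f σ).toLinearMap = BV := by
    apply LinearMap.ext_basis e e
    intro i j
    simp only [LinearMap.compl₁₂_apply, LinearEquiv.coe_coe, Basis.equiv_apply]
    rcases eq_or_ne i j with rfl | hij
    · rcases he1 i with h | h <;> rcases hf1 (σ i) with h' | h'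
      · rw [h, h']
      · exfalso
        have := hσ i
        rw [hp, hq] at this
        simp only [h, h'] at this
        norm_num at this
      · exfalso
        have := hσ i
        rw [hp, hq] at this
        simp only [h, h'] at this
        norm_num at this
      · rw [h, h']
    · rw [he hij, hf (fun hc => hij (σ.injective hc))]
  intro x y
  have := LinearMap.congr_fun₂ key x y
  simpa using this

lemma card_subtype_sum {α β : Type*} [Fintype α] [Fintype β] (p : α ⊕ β → Prop)
    [DecidablePred p] :
    Fintype.card {x // p x} =
      Fintype.card {a // p (Sum.inl a)} + Fintype.card {b // p (Sum.inr b)} := by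
  rw [Fintype.card_congr (Equiv.subtypeSum (p := p)), Fintype.card_sum]

lemma pm_one_ne_zero {r : ℝ} (h : r = 1 ∨ r = -1) : r ≠ 0 := by rcases h with h | h <;> simp [h]

lemma extend_isometry_of_subspace {V : Type*} [AddCommGroup V] [Module ℝ V]
    [FiniteDimensional ℝ V] (B : LinearMap.BilinForm ℝ V) (hs : B.IsSymm)
    (hn : B.Nondegenerate) (U W : Submodule ℝ V)
    (hU : (B.restrict U).Nondegenerate) (hW : (B.restrict W).Nondegenerate)
    (φ : U ≃ₗ[ℝ] W) (hφ : ∀ u u' : U, B (φ u) (φ u') = B u u') :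
    ∃ g : V ≃ₗ[ℝ] V, (∀ x y, B (g x) (g y) = B x y) ∧ ∀ u : U, g u = φ u := by
  classical
  have hrefl : B.IsRefl := hs.isRefl
  set Up := B.orthogonal U with hUp
  set Wp := B.orthogonal W with hWp
  have hUc : IsCompl U Up := LinearMap.BilinForm.isCompl_orthogonal_of_restrict_nondegenerate hrefl hU
  have hWc : IsCompl W Wp := LinearMap.BilinForm.isCompl_orthogonal_of_restrict_nondegenerate hrefl hW
  have hUpnd : (B.restrict Up).Nondegenerate := by
    rw [LinearMap.BilinForm.restrict_nondegenerate_iff_isCompl_orthogonal hrefl, hUp,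
      LinearMap.BilinForm.orthogonal_orthogonal hn hrefl]
    exact hUc.symm
  have hWpnd : (B.restrict Wp).Nondegenerate := by
    rw [LinearMap.BilinForm.restrict_nondegenerate_iff_isCompl_orthogonal hrefl, hWp,
      LinearMap.BilinForm.orthogonal_orthogonal hn hrefl]
    exact hWc.symm
  have hsymmR : ∀ (S : Submodule ℝ V), (B.restrict S).IsSymm := by
    intro S; constructor; intro x y
    simp only [LinearMap.BilinForm.restrict_apply, RingHom.id_apply]
    exact hs.eq _ _
  obtain ⟨eU, heU, heU1⟩ := exists_pm_one_orthogonal_basis (B.restrict U) (hsymmR U) hU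
  obtain ⟨eUp, heUp, heUp1⟩ := exists_pm_one_orthogonal_basis (B.restrict Up) (hsymmR Up) hUpnd
  obtain ⟨eW, heW, heW1⟩ := exists_pm_one_orthogonal_basis (B.restrict W) (hsymmR W) hW
  obtain ⟨eWp, heWp, heWp1⟩ := exists_pm_one_orthogonal_basis (B.restrict Wp) (hsymmR Wp) hWpnd
  -- combined bases of V
  set bV1 : Basis (Fin (finrank ℝ U) ⊕ Fin (finrank ℝ Up)) ℝ V :=
    (eU.prod eUp).map (Submodule.prodEquivOfIsCompl U Up hUc) with hbV1
  set bV2 : Basis (Fin (finrank ℝ W) ⊕ Fin (finrank ℝ Wp)) ℝ V :=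
    (eW.prod eWp).map (Submodule.prodEquivOfIsCompl W Wp hWc) with hbV2
  have hbV1l : ∀ i, bV1 (Sum.inl i) = (eU i : V) := by
    intro i
    simp [hbV1, Basis.map_apply, Basis.prod_apply, Submodule.coe_prodEquivOfIsCompl']
  have hbV1r : ∀ j, bV1 (Sum.inr j) = (eUp j : V) := by
    intro j
    simp [hbV1, Basis.map_apply, Basis.prod_apply, Submodule.coe_prodEquivOfIsCompl']
  have hbV2l : ∀ i, bV2 (Sum.inl i) = (eW i : V) := by
    intro i
    simp [hbV2, Basis.map_apply, Basis.prod_apply, Submodule.coe_prodEquivOfIsCompl']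
  have hbV2r : ∀ j, bV2 (Sum.inr j) = (eWp j : V) := by
    intro j
    simp [hbV2, Basis.map_apply, Basis.prod_apply, Submodule.coe_prodEquivOfIsCompl']
  -- orthogonality of the combined bases
  have horthoU : ∀ (u : U) (w : Up), B u w = 0 := fun u w =>
    LinearMap.BilinForm.mem_orthogonal_iff.mp w.2 u u.2
  have horthoW : ∀ (u : W) (w : Wp), B u w = 0 := fun u w =>
    LinearMap.BilinForm.mem_orthogonal_iff.mp w.2 u u.2
  have hoV1 : B.iIsOrtho bV1 := by
    rintro (i | i) (j | j) hij
    · show B _ _ = 0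
      rw [hbV1l, hbV1l]
      exact heU (fun h => hij (congrArg Sum.inl h))
    · show B _ _ = 0
      rw [hbV1l, hbV1r]
      exact horthoU _ _
    · show B _ _ = 0
      rw [hbV1r, hbV1l]
      have := horthoU (eU j) (eUp i)
      rw [← hs.eq _ _] at this
      simpa using this
    · show B _ _ = 0
      rw [hbV1r, hbV1r]
      exact heUp (fun h => hij (congrArg Sum.inr h))
  have hoV2 : B.iIsOrtho bV2 := by
    rintro (i | i) (j | j) hij
    · show B _ _ = 0
      rw [hbV2l, hbV2l]
      exact heW (fun h => hij (congrArg Sum.inl h))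
    · show B _ _ = 0
      rw [hbV2l, hbV2r]
      exact horthoW _ _
    · show B _ _ = 0
      rw [hbV2r, hbV2l]
      have := horthoW (eW j) (eWp i)
      rw [← hs.eq _ _] at this
      simpa using this
    · show B _ _ = 0
      rw [hbV2r, hbV2r]
      exact heWp (fun h => hij (congrArg Sum.inr h))
  have h1V1 : ∀ i, B (bV1 i) (bV1 i) = 1 ∨ B (bV1 i) (bV1 i) = -1 := by
    rintro (i | i)
    · rw [hbV1l]; exact heU1 i
    · rw [hbV1r]; exact heUp1 i
  have h1V2 : ∀ i, B (bV2 i) (bV2 i) = 1 ∨ B (bV2 i) (bV2 i) = -1 := by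
    rintro (i | i)
    · rw [hbV2l]; exact heW1 i
    · rw [hbV2r]; exact heWp1 i
  -- equality of positive counts
  have hcounts := posCount_eq B bV1 bV2 hoV1 hoV2
      (fun i => pm_one_ne_zero (h1V1 i)) (fun i => pm_one_ne_zero (h1V2 i))
  rw [card_subtype_sum, card_subtype_sum] at hcounts
  -- translate counts to restricted forms
  have hceU : Fintype.card {i // 0 < B (bV1 (Sum.inl i)) (bV1 (Sum.inl i))} =
      Fintype.card {i // 0 < (B.restrict U) (eU i) (eU i)} := by
    apply Fintype.card_congr
    apply Equiv.subtypeEquivRight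
    intro i
    rw [hbV1l]
    exact Iff.rfl
  have hceUp : Fintype.card {i // 0 < B (bV1 (Sum.inr i)) (bV1 (Sum.inr i))} =
      Fintype.card {i // 0 < (B.restrict Up) (eUp i) (eUp i)} := by
    apply Fintype.card_congr
    apply Equiv.subtypeEquivRight
    intro i
    rw [hbV1r]
    exact Iff.rfl
  have hceW : Fintype.card {i // 0 < B (bV2 (Sum.inl i)) (bV2 (Sum.inl i))} =
      Fintype.card {i // 0 < (B.restrict W) (eW i) (eW i)} := by
    apply Fintype.card_congr
    apply Equiv.subtypeEquivRight
    intro i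
    rw [hbV2l]
    exact Iff.rfl
  have hceWp : Fintype.card {i // 0 < B (bV2 (Sum.inr i)) (bV2 (Sum.inr i))} =
      Fintype.card {i // 0 < (B.restrict Wp) (eWp i) (eWp i)} := by
    apply Fintype.card_congr
    apply Equiv.subtypeEquivRight
    intro i
    rw [hbV2r]
    exact Iff.rfl
  rw [hceU, hceUp, hceW, hceWp] at hcounts
  -- transport eU through φ
  set fW : Basis (Fin (finrank ℝ U)) ℝ W := eU.map φ with hfW
  have hfWo : (B.restrict W).iIsOrtho fW := by
    intro i j hij
    show (B.restrict W) _ _ = 0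
    rw [hfW, Basis.map_apply, Basis.map_apply]
    show B (φ (eU i)) (φ (eU j)) = 0
    rw [hφ]
    exact heU hij
  have hfW1 : ∀ i, (B.restrict W) (fW i) (fW i) = (B.restrict U) (eU i) (eU i) := by
    intro i
    rw [hfW, Basis.map_apply]
    show B (φ (eU i)) (φ (eU i)) = _
    rw [hφ]
    rfl
  have hposUW : Fintype.card {i // 0 < (B.restrict U) (eU i) (eU i)} =
      Fintype.card {j // 0 < (B.restrict W) (eW j) (eW j)} := by
    have := posCount_eq (B.restrict W) fW eW hfWo heW
      (fun i => by rw [hfW1]; exact pm_one_ne_zero (heU1 i))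
      (fun j => pm_one_ne_zero (heW1 j))
    rw [← this]
    apply Fintype.card_congr
    apply Equiv.subtypeEquivRight
    intro i
    rw [hfW1]
  -- counts for orthogonal complements agree
  have hposUpWp : Fintype.card {i // 0 < (B.restrict Up) (eUp i) (eUp i)} =
      Fintype.card {j // 0 < (B.restrict Wp) (eWp j) (eWp j)} := by omega
  have hdim : finrank ℝ Up = finrank ℝ Wp := by
    rw [hUp, hWp, LinearMap.BilinForm.finrank_orthogonal hn,
      LinearMap.BilinForm.finrank_orthogonal hn, φ.finrank_eq]
  -- isometry on complements
  obtain ⟨ψ, hψ⟩ := isometry_of_posCount_eq (B.restrict Up) (B.restrict Wp) eUp eWp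
    heUp heWp heUp1 heWp1 (by rw [Fintype.card_fin, Fintype.card_fin, hdim]) hposUpWp
  have hψ' : ∀ (w w' : Up), B (ψ w) (ψ w') = B w w' := fun w w' => hψ w w'
  -- assemble g
  set g : V ≃ₗ[ℝ] V := (Submodule.prodEquivOfIsCompl U Up hUc).symm.trans
    ((φ.prodCongr ψ).trans (Submodule.prodEquivOfIsCompl W Wp hWc)) with hg
  have hgapply : ∀ x : V, g x = (φ ((Submodule.prodEquivOfIsCompl U Up hUc).symm x).1 : V) +
      (ψ ((Submodule.prodEquivOfIsCompl U Up hUc).symm x).2 : V) := by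
    intro x
    rw [hg]
    rfl
  have hdecomp : ∀ x : V, x = (((Submodule.prodEquivOfIsCompl U Up hUc).symm x).1 : V) +
      (((Submodule.prodEquivOfIsCompl U Up hUc).symm x).2 : V) := by
    intro x
    conv_lhs => rw [← (Submodule.prodEquivOfIsCompl U Up hUc).apply_symm_apply x]
    rw [Submodule.coe_prodEquivOfIsCompl']
  refine ⟨g, ?_, ?_⟩
  · intro x y
    rw [hgapply x, hgapply y]
    conv_rhs => rw [hdecomp x, hdecomp y]
    simp only [map_add, LinearMap.add_apply]
    rw [hφ, hψ']
    rw [horthoW (φ _) (ψ _), horthoU]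
    have h1 : B (ψ ((Submodule.prodEquivOfIsCompl U Up hUc).symm x).2 : V)
        (φ ((Submodule.prodEquivOfIsCompl U Up hUc).symm y).1 : V) = 0 := by
      have := horthoW (φ ((Submodule.prodEquivOfIsCompl U Up hUc).symm y).1)
        (ψ ((Submodule.prodEquivOfIsCompl U Up hUc).symm x).2)
      rw [← hs.eq _ _] at this
      simpa using this
    have h2 : B (((Submodule.prodEquivOfIsCompl U Up hUc).symm x).2 : V)
        (((Submodule.prodEquivOfIsCompl U Up hUc).symm y).1 : V) = 0 := by
      have := horthoU (((Submodule.prodEquivOfIsCompl U Up hUc).symm y).1)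
        (((Submodule.prodEquivOfIsCompl U Up hUc).symm x).2)
      rw [← hs.eq _ _] at this
      simpa using this
    rw [h1, h2]
  · intro u
    rw [hgapply]
    rw [Submodule.prodEquivOfIsCompl_symm_apply_left]
    simp

lemma exists_span_equiv {V : Type*} [AddCommGroup V] [Module ℝ V]
    (b : LinearMap.BilinForm ℝ V) (E : Set V) (ι : V → V)
    (hE : ∀ x ∈ Submodule.span ℝ E, (∀ y ∈ Submodule.span ℝ E, b x y = 0) → x = 0)
    (hιE : ∀ x ∈ Submodule.span ℝ (ι '' E),
      (∀ y ∈ Submodule.span ℝ (ι '' E), b x y = 0) → x = 0)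
    (hpres : ∀ x ∈ E, ∀ y ∈ E, b x y = b (ι x) (ι y)) :
    ∃ φ : (Submodule.span ℝ E) ≃ₗ[ℝ] (Submodule.span ℝ (ι '' E)),
      (∀ u u' : Submodule.span ℝ E, b (φ u) (φ u') = b u u') ∧
      ∀ x (hx : x ∈ E), (φ ⟨x, Submodule.subset_span hx⟩ : V) = ι x := by
  classical
  set S : (E →₀ ℝ) →ₗ[ℝ] V := Finsupp.linearCombination ℝ ((↑) : E → V) with hSdef
  set T : (E →₀ ℝ) →ₗ[ℝ] V := Finsupp.linearCombination ℝ (fun e : E => ι e) with hTdef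
  have hSrange : LinearMap.range S = Submodule.span ℝ E := by
    rw [hSdef, Finsupp.range_linearCombination, Subtype.range_coe]
  have hTrange : LinearMap.range T = Submodule.span ℝ (ι '' E) := by
    rw [hTdef, Finsupp.range_linearCombination]
    congr 1
    rw [Set.image_eq_range]
  have hbTT : ∀ c d : E →₀ ℝ, b (T c) (T d) = b (S c) (S d) := by
    intro c d
    rw [hSdef, hTdef]
    simp only [Finsupp.linearCombination_apply, Finsupp.sum]
    simp only [map_sum, LinearMap.sum_apply, map_smul, LinearMap.smul_apply, smul_eq_mul]
    refine Finset.sum_congr rfl fun e _ => ?_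
    congr 1
    refine Finset.sum_congr rfl fun e' _ => ?_
    rw [← hpres _ e'.2 _ e.2]
  have hker : LinearMap.ker S ≤ LinearMap.ker T := by
    intro c hc
    rw [LinearMap.mem_ker] at hc ⊢
    apply hιE (T c) (by rw [← hTrange]; exact ⟨c, rfl⟩)
    intro y hy
    rw [← hTrange] at hy
    obtain ⟨d, rfl⟩ := hy
    rw [hbTT, hc, map_zero, LinearMap.zero_apply]
  set q : ((E →₀ ℝ) ⧸ LinearMap.ker S) →ₗ[ℝ] V := (LinearMap.ker S).liftQ T hker with hq
  set em : ((E →₀ ℝ) ⧸ LinearMap.ker S) ≃ₗ[ℝ] LinearMap.range S := S.quotKerEquivRange with hem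
  set ce : (Submodule.span ℝ E) ≃ₗ[ℝ] LinearMap.range S :=
    LinearEquiv.ofEq _ _ hSrange.symm with hce
  set θ : (Submodule.span ℝ E) →ₗ[ℝ] V :=
    q ∘ₗ (em.symm.toLinearMap ∘ₗ ce.toLinearMap) with hθdef
  have hθ : ∀ (c : E →₀ ℝ) (h : S c ∈ Submodule.span ℝ E), θ ⟨S c, h⟩ = T c := by
    intro c h
    have h1 : em (Submodule.Quotient.mk c) = ce ⟨S c, h⟩ := by
      apply Subtype.ext
      rw [hem, LinearMap.quotKerEquivRange_apply_mk]
      rfl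
    have h2 : em.symm (ce ⟨S c, h⟩) = Submodule.Quotient.mk c := by
      rw [← h1, LinearEquiv.symm_apply_apply]
    rw [hθdef]
    simp only [LinearMap.coe_comp, Function.comp_apply, LinearEquiv.coe_coe]
    rw [h2, hq, Submodule.liftQ_apply]
  have hexists : ∀ u : Submodule.span ℝ E, ∃ c, S c = (u : V) := by
    intro u
    have : (u : V) ∈ LinearMap.range S := by rw [hSrange]; exact u.2
    exact this
  have hθb : ∀ u u' : Submodule.span ℝ E, b (θ u) (θ u') = b u u' := by
    intro u u'
    obtain ⟨c, hc⟩ := hexists u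
    obtain ⟨d, hd⟩ := hexists u'
    have hu : u = ⟨S c, hc ▸ u.2⟩ := Subtype.ext hc.symm
    have hu' : u' = ⟨S d, hd ▸ u'.2⟩ := Subtype.ext hd.symm
    rw [hu, hu', hθ, hθ, hbTT]
  have hθrange : LinearMap.range θ = Submodule.span ℝ (ι '' E) := by
    rw [hθdef, LinearMap.range_comp_of_range_eq_top, hq, Submodule.range_liftQ, hTrange]
    rw [LinearMap.range_eq_top]
    exact em.symm.surjective.comp ce.surjective
  have hθinj : Function.Injective θ := by
    rw [← LinearMap.ker_eq_bot, eq_bot_iff]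
    intro u hu
    rw [LinearMap.mem_ker] at hu
    have : (u : V) = 0 := by
      apply hE _ u.2
      intro y hy
      have := hθb u ⟨y, hy⟩
      rw [hu, map_zero, LinearMap.zero_apply] at this
      exact this.symm
    simpa using Subtype.ext this
  set θ' : (Submodule.span ℝ E) →ₗ[ℝ] (Submodule.span ℝ (ι '' E)) :=
    θ.codRestrict _ (fun u => by rw [← hθrange]; exact ⟨u, rfl⟩) with hθ'
  have hθ'bij : Function.Bijective θ' := by
    constructor
    · intro u v h
      exact hθinj (congrArg Subtype.val h)
    · intro w
      have hw : (w : V) ∈ LinearMap.range θ := by rw [hθrange]; exact w.2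
      obtain ⟨u, hu⟩ := hw
      exact ⟨u, Subtype.ext hu⟩
  refine ⟨LinearEquiv.ofBijective θ' hθ'bij, ?_, ?_⟩
  · intro u u'
    have h1 : ((LinearEquiv.ofBijective θ' hθ'bij u : Submodule.span ℝ (ι '' E)) : V) = θ u := rfl
    rw [show ((LinearEquiv.ofBijective θ' hθ'bij u : Submodule.span ℝ (ι '' E)) : V) = θ u
      from rfl, show ((LinearEquiv.ofBijective θ' hθ'bij u' : Submodule.span ℝ (ι '' E)) : V)
      = θ u' from rfl]
    exact hθb u u'
  · intro x hx
    have h0 : ((LinearEquiv.ofBijective θ' hθ'bij ⟨x, Submodule.subset_span hx⟩ :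
        Submodule.span ℝ (ι '' E)) : V) = θ ⟨x, Submodule.subset_span hx⟩ := rfl
    rw [h0]
    have hsc : S (Finsupp.single ⟨x, hx⟩ 1) = x := by
      rw [hSdef, Finsupp.linearCombination_single, one_smul]
    have : (⟨x, Submodule.subset_span hx⟩ : Submodule.span ℝ E)
        = ⟨S (Finsupp.single ⟨x, hx⟩ 1), by rw [hsc]; exact Submodule.subset_span hx⟩ :=
      Subtype.ext hsc.symm
    rw [this, hθ]
    rw [hTdef, Finsupp.linearCombination_single, one_smul]

/-- A map defined on a subset `E` of `ℝ^n`, whose domain span and image span are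
nondegenerate for a nondegenerate symmetric bilinear form `b`, extends to a linear
isometry of `(ℝ^n, b)` iff it preserves `b` on `E`. -/
theorem gram_extension_iff (n : ℕ) (b : (Fin n → ℝ) →ₗ[ℝ] (Fin n → ℝ) →ₗ[ℝ] ℝ)
    (hsymm : ∀ x y, b x y = b y x)
    (hnd : ∀ x, (∀ y, b x y = 0) → x = 0)
    (E : Set (Fin n → ℝ)) (ι : (Fin n → ℝ) → (Fin n → ℝ))
    (hE : ∀ x ∈ Submodule.span ℝ E, (∀ y ∈ Submodule.span ℝ E, b x y = 0) → x = 0)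
    (hιE : ∀ x ∈ Submodule.span ℝ (ι '' E),
      (∀ y ∈ Submodule.span ℝ (ι '' E), b x y = 0) → x = 0) :
    (∃ g : (Fin n → ℝ) ≃ₗ[ℝ] (Fin n → ℝ),
        (∀ x y, b (g x) (g y) = b x y) ∧ ∀ x ∈ E, g x = ι x) ↔
      (∀ x ∈ E, ∀ y ∈ E, b x y = b (ι x) (ι y)) := by
  constructor
  · rintro ⟨g, hg, hgE⟩ x hx y hy
    rw [← hgE x hx, ← hgE y hy, hg]
  · intro hpres
    obtain ⟨φ, hφ, hφE⟩ := exists_span_equiv b E ι hE hιE hpres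
    have hs : LinearMap.BilinForm.IsSymm b := ⟨fun x y => hsymm x y⟩
    have hn : LinearMap.BilinForm.Nondegenerate b :=
      (LinearMap.IsRefl.nondegenerate_iff_separatingLeft hs.isRefl).mpr fun x hx => hnd x hx
    have hU : ((LinearMap.BilinForm.restrict b (Submodule.span ℝ E))).Nondegenerate := by
      refine (LinearMap.IsRefl.nondegenerate_iff_separatingLeft
        (LinearMap.BilinForm.IsSymm.isRefl (B := LinearMap.BilinForm.restrict b (Submodule.span ℝ E))
          ⟨fun x y => hs.eq _ _⟩)).mpr fun u hu => ?_
      have : (u : Fin n → ℝ) = 0 := hE _ u.2 (fun y hy => hu ⟨y, hy⟩)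
      exact Subtype.ext this
    have hW : ((LinearMap.BilinForm.restrict b (Submodule.span ℝ (ι '' E)))).Nondegenerate := by
      refine (LinearMap.IsRefl.nondegenerate_iff_separatingLeft
        (LinearMap.BilinForm.IsSymm.isRefl (B := LinearMap.BilinForm.restrict b (Submodule.span ℝ (ι '' E)))
          ⟨fun x y => hs.eq _ _⟩)).mpr fun u hu => ?_
      have : (u : Fin n → ℝ) = 0 := hιE _ u.2 (fun y hy => hu ⟨y, hy⟩)
      exact Subtype.ext this
    obtain ⟨g, hg, hgU⟩ := extend_isometry_of_subspace b hs hn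
      (Submodule.span ℝ E) (Submodule.span ℝ (ι '' E)) hU hW φ hφ
    refine ⟨g, hg, ?_⟩
    intro x hx
    have := hgU ⟨x, Submodule.subset_span hx⟩
    rw [this, hφE x hx]
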